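/- (Existence and uniqueness of T-k-th roots) For every symmetric T-positive semidefinite tensor A ∈ ℝ^{n×n×p} and every integer k ≥ 1, there exists a unique symmetric T-positive semidefinite tensor B ∈ ℝ^{n×n×p} with B^k = A, where B^k denotes the k-fold T-product. -/

import Mathlib

open Matrix BigOperators

variable {p : ℕ}

/-- Block circulant matrix of a third-order tensor (tensor = family of frontal slices). -/
def bcirc {I J : Type*} (A : Fin p → Matrix I J ℝ) :
    Matrix (Fin p × I) (Fin p × J) ℝ :=
  Matrix.of fun ik jl => A (ik.1 - jl.1) ik.2 jl.2

/-- T-product of third-order tensors: `(A*B)^(k) = Σ_j A^(k-j) B^(j)` (indices mod p),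
which is exactly `fold(bcirc(A) · unfold(B))`. -/
def tProd {I J K : Type*} [Fintype J] (A : Fin p → Matrix I J ℝ)
    (B : Fin p → Matrix J K ℝ) : Fin p → Matrix I K ℝ :=
  fun k => ∑ j : Fin p, A (k - j) * B j

/-- Tensor transpose: transpose each frontal slice and reverse slices 2..p. -/
def ttrans {I J : Type*} (A : Fin p → Matrix I J ℝ) :
    Fin p → Matrix J I ℝ :=
  fun k => (A (-k))ᵀ

/-- Identity tensor: first frontal slice the identity matrix, other slices zero. -/
def tid (I : Type*) [DecidableEq I] [NeZero p] : Fin p → Matrix I I ℝ :=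
  fun k => if k = 0 then 1 else 0

/-- Entrywise (Frobenius) inner product of third-order tensors. -/
def tinner {I J : Type*} [Fintype I] [Fintype J]
    (X Y : Fin p → Matrix I J ℝ) : ℝ :=
  ∑ k, ∑ i, ∑ j, X k i j * Y k i j

/-- Symmetric T-positive semidefinite tensor. -/
def TPSD {I : Type*} [Fintype I] (A : Fin p → Matrix I I ℝ) : Prop :=
  ttrans A = A ∧ ∀ X : Fin p → Matrix I (Fin 1) ℝ, 0 ≤ tinner X (tProd A X)

/-- Symmetric T-positive definite tensor. -/
def TPD {I : Type*} [Fintype I] (A : Fin p → Matrix I I ℝ) : Prop :=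
  ttrans A = A ∧ ∀ X : Fin p → Matrix I (Fin 1) ℝ, X ≠ 0 → 0 < tinner X (tProd A X)

/-- k-fold T-product power of a tensor, with `tpow A 0` the identity tensor. -/
def tpow {I : Type*} [Fintype I] [DecidableEq I] [NeZero p]
    (A : Fin p → Matrix I I ℝ) : ℕ → Fin p → Matrix I I ℝ
  | 0 => tid I
  | k + 1 => tProd A (tpow A k)

set_option linter.unusedSectionVars false

section MatrixRoot
variable {m : Type*} [Fintype m] [DecidableEq m]

lemma unitary_conj_pow (V : Matrix m m ℝ) (hV : V ∈ Matrix.unitaryGroup m ℝ)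
    (d : m → ℝ) (k : ℕ) :
    (V * Matrix.diagonal d * star V) ^ k
      = V * Matrix.diagonal (fun i => d i ^ k) * star V := by
  induction k with
  | zero =>
      simp [Matrix.mem_unitaryGroup_iff.mp hV]
  | succ s ih =>
      rw [pow_succ, ih]
      have h1 : star V * V = 1 := Matrix.mem_unitaryGroup_iff'.mp hV
      calc V * Matrix.diagonal (fun i => d i ^ s) * star V *
            (V * Matrix.diagonal d * star V)
          = V * (Matrix.diagonal (fun i => d i ^ s) * (star V * V) *
              Matrix.diagonal d) * star V := by
            simp only [Matrix.mul_assoc]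
        _ = V * Matrix.diagonal (fun i => d i ^ (s + 1)) * star V := by
            have hd : (fun i => d i ^ s * d i) = fun i => d i ^ (s + 1) := by
              funext i; rw [pow_succ]
            rw [h1, Matrix.mul_one, Matrix.diagonal_mul_diagonal, hd]

lemma pow_mulVec_eigen {M : Matrix m m ℝ} {w : m → ℝ} {μ : ℝ}
    (h : M *ᵥ w = μ • w) (k : ℕ) : (M ^ k) *ᵥ w = (μ ^ k) • w := by
  induction k with
  | zero => simp
  | succ s ih =>
      rw [pow_succ, ← Matrix.mulVec_mulVec, h, Matrix.mulVec_smul, ih,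
        smul_smul, pow_succ]
      ring_nf

lemma psd_root_eigen {C : Matrix m m ℝ} (hC : C.PosSemidef) {k : ℕ} (hk : k ≠ 0)
    {w : m → ℝ} {μ : ℝ} (hμ : 0 ≤ μ) (hw : (C ^ k) *ᵥ w = (μ ^ k) • w) :
    C *ᵥ w = μ • w := by
  set V : Matrix m m ℝ := (hC.1.eigenvectorUnitary : Matrix m m ℝ)
  have hV : V ∈ Matrix.unitaryGroup m ℝ := hC.1.eigenvectorUnitary.2
  have hVV : V * star V = 1 := Matrix.mem_unitaryGroup_iff.mp hV
  have hVV' : star V * V = 1 := Matrix.mem_unitaryGroup_iff'.mp hV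
  set φ : m → ℝ := hC.1.eigenvalues
  have hspec : C = V * Matrix.diagonal φ * star V := by
    have := hC.1.spectral_theorem
    simpa using this
  have hCk : C ^ k = V * Matrix.diagonal (fun i => φ i ^ k) * star V := by
    rw [hspec, unitary_conj_pow V hV]
  set u : m → ℝ := star V *ᵥ w with hu
  have hdiagk : Matrix.diagonal (fun i => φ i ^ k) *ᵥ u = (μ ^ k) • u := by
    have h1 : star V *ᵥ ((C ^ k) *ᵥ w) = star V *ᵥ ((μ ^ k) • w) := by rw [hw]
    rw [hCk] at h1
    rw [Matrix.mulVec_mulVec, Matrix.mulVec_smul] at h1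
    calc Matrix.diagonal (fun i => φ i ^ k) *ᵥ u
        = (Matrix.diagonal (fun i => φ i ^ k) * star V) *ᵥ w := by
          rw [← Matrix.mulVec_mulVec]
      _ = (star V * (V * Matrix.diagonal (fun i => φ i ^ k) * star V)) *ᵥ w := by
          rw [show star V * (V * Matrix.diagonal (fun i => φ i ^ k) * star V)
              = (star V * V) * Matrix.diagonal (fun i => φ i ^ k) * star V by
            simp only [Matrix.mul_assoc], hVV', Matrix.one_mul]
      _ = (μ ^ k) • u := h1
  have hdiag : Matrix.diagonal φ *ᵥ u = μ • u := by
    funext i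
    have hi := congrFun hdiagk i
    simp only [Matrix.mulVec_diagonal, Pi.smul_apply, smul_eq_mul] at hi ⊢
    by_cases hui : u i = 0
    · simp [hui]
    · have : φ i ^ k = μ ^ k := mul_right_cancel₀ hui hi
      have : φ i = μ := by
        exact (pow_left_inj₀ (hC.eigenvalues_nonneg i) hμ hk).mp this
      rw [this]
  calc C *ᵥ w = V *ᵥ (Matrix.diagonal φ *ᵥ (star V *ᵥ w)) := by
        rw [hspec, Matrix.mulVec_mulVec, Matrix.mulVec_mulVec]
    _ = V *ᵥ (μ • u) := by rw [← hu, hdiag]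
    _ = μ • (V *ᵥ (star V *ᵥ w)) := by rw [Matrix.mulVec_smul, hu]
    _ = μ • w := by rw [Matrix.mulVec_mulVec, hVV, Matrix.one_mulVec]

lemma psd_pow_inj {B C : Matrix m m ℝ} (hB : B.PosSemidef) (hC : C.PosSemidef)
    {k : ℕ} (hk : k ≠ 0) (h : B ^ k = C ^ k) : B = C := by
  set V : Matrix m m ℝ := (hB.1.eigenvectorUnitary : Matrix m m ℝ)
  have hV : V ∈ Matrix.unitaryGroup m ℝ := hB.1.eigenvectorUnitary.2
  have hVV : V * star V = 1 := Matrix.mem_unitaryGroup_iff.mp hV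
  have hVV' : star V * V = 1 := Matrix.mem_unitaryGroup_iff'.mp hV
  set ε : m → ℝ := hB.1.eigenvalues
  have hspec : B = V * Matrix.diagonal ε * star V := by simpa using hB.1.spectral_theorem
  have hBV : B * V = V * Matrix.diagonal ε := by
    rw [hspec, Matrix.mul_assoc (V * Matrix.diagonal ε) (star V) V, hVV',
      Matrix.mul_one]
  have hcol : ∀ j, B *ᵥ (fun t => V t j) = ε j • (fun t => V t j) := by
    intro j
    funext i
    have := congrFun (congrFun hBV i) j
    rw [Matrix.mul_apply, Matrix.mul_diagonal] at this
    simp only [Matrix.mulVec, dotProduct, Pi.smul_apply, smul_eq_mul]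
    rw [this]; ring
  have hcolC : ∀ j, C *ᵥ (fun t => V t j) = ε j • (fun t => V t j) := by
    intro j
    refine psd_root_eigen hC hk (hB.eigenvalues_nonneg j) ?_
    rw [← h]
    exact pow_mulVec_eigen (hcol j) k
  have hCV : C * V = V * Matrix.diagonal ε := by
    ext i j
    have := congrFun (hcolC j) i
    simp only [Matrix.mulVec, dotProduct, Pi.smul_apply, smul_eq_mul] at this
    rw [Matrix.mul_apply, Matrix.mul_diagonal]
    rw [this, mul_comm]
  have : C = B := by
    calc C = C * (V * star V) := by rw [hVV, Matrix.mul_one]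
      _ = (C * V) * star V := by rw [Matrix.mul_assoc]
      _ = V * Matrix.diagonal ε * star V := by rw [hCV]
      _ = B := hspec.symm
  exact this.symm

theorem psd_kth_root_matrix {N : Matrix m m ℝ} (hN : N.PosSemidef) {k : ℕ}
    (hk : k ≠ 0) : ∃! M : Matrix m m ℝ, M.PosSemidef ∧ M ^ k = N := by
  set V : Matrix m m ℝ := (hN.1.eigenvectorUnitary : Matrix m m ℝ)
  have hV : V ∈ Matrix.unitaryGroup m ℝ := hN.1.eigenvectorUnitary.2
  set d : m → ℝ := hN.1.eigenvalues
  set f : m → ℝ := fun i => (d i) ^ ((k : ℝ)⁻¹)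
  have hf : ∀ i, 0 ≤ f i := fun i => Real.rpow_nonneg (hN.eigenvalues_nonneg i) _
  refine ⟨V * Matrix.diagonal f * star V, ⟨?_, ?_⟩, ?_⟩
  · have := (Matrix.PosSemidef.diagonal (R := ℝ) (n := m) (d := f)
        (fun i => hf i)).mul_mul_conjTranspose_same V
    simpa [Matrix.star_eq_conjTranspose] using this
  · rw [unitary_conj_pow V hV]
    have : (fun i => f i ^ k) = d := by
      funext i
      exact Real.rpow_inv_natCast_pow (hN.eigenvalues_nonneg i) hk
    rw [this]
    simpa using hN.1.spectral_theorem.symm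
  · rintro M ⟨hM, hMk⟩
    have hroot : (V * Matrix.diagonal f * star V).PosSemidef := by
      have := (Matrix.PosSemidef.diagonal (R := ℝ) (n := m) (d := f)
          (fun i => hf i)).mul_mul_conjTranspose_same V
      simpa [Matrix.star_eq_conjTranspose] using this
    refine psd_pow_inj hM hroot hk ?_
    rw [hMk, unitary_conj_pow V hV]
    have : (fun i => f i ^ k) = d := by
      funext i
      exact Real.rpow_inv_natCast_pow (hN.eigenvalues_nonneg i) hk
    rw [this]
    simpa using hN.1.spectral_theorem

end MatrixRoot

section Bcirc

variable {n : ℕ} [NeZero p]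

lemma bcirc_injective :
    Function.Injective (bcirc (p := p) (I := Fin n) (J := Fin n)) := by
  intro A B h
  funext c
  ext i j
  have := congrFun (congrFun h (c, i)) (0, j)
  simpa [bcirc] using this

lemma bcirc_tProd (A B : Fin p → Matrix (Fin n) (Fin n) ℝ) :
    bcirc (tProd A B) = bcirc A * bcirc B := by
  ext ⟨k, i⟩ ⟨l, j⟩
  simp only [bcirc, Matrix.of_apply, tProd, Matrix.sum_apply, Matrix.mul_apply,
    Fintype.sum_prod_type]
  refine Fintype.sum_equiv (Equiv.addRight l) _ _ fun c => ?_
  simp only [Equiv.coe_addRight]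
  refine Finset.sum_congr rfl fun t _ => ?_
  rw [add_sub_cancel_right, sub_add_eq_sub_sub, sub_right_comm]

lemma bcirc_tid : bcirc (tid (Fin n)) = (1 : Matrix (Fin p × Fin n) (Fin p × Fin n) ℝ) := by
  ext ⟨k, i⟩ ⟨l, j⟩
  simp only [bcirc, Matrix.of_apply, tid]
  by_cases h : k = l
  · subst h
    simp [Matrix.one_apply, Prod.ext_iff]
  · have : k - l ≠ 0 := by
      intro hc; exact h (by rwa [sub_eq_zero] at hc)
    simp [this, Matrix.one_apply, Prod.ext_iff, h]

lemma bcirc_tpow (A : Fin p → Matrix (Fin n) (Fin n) ℝ) (k : ℕ) :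
    bcirc (tpow A k) = (bcirc A) ^ k := by
  induction k with
  | zero => simpa [tpow] using bcirc_tid
  | succ s ih => rw [tpow, bcirc_tProd, ih, pow_succ']

lemma quad_eq (A : Fin p → Matrix (Fin n) (Fin n) ℝ)
    (X : Fin p → Matrix (Fin n) (Fin 1) ℝ) :
    tinner X (tProd A X)
      = (fun q : Fin p × Fin n => X q.1 q.2 0) ⬝ᵥ
          (bcirc A *ᵥ fun q : Fin p × Fin n => X q.1 q.2 0) := by
  simp only [tinner, tProd, Matrix.sum_apply, Matrix.mul_apply, Fin.sum_univ_one,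
    dotProduct, Matrix.mulVec, bcirc, Matrix.of_apply, Fintype.sum_prod_type]

lemma tpsd_iff_posSemidef (A : Fin p → Matrix (Fin n) (Fin n) ℝ) :
    TPSD A ↔ (bcirc A).PosSemidef := by
  constructor
  · rintro ⟨hsym, hq⟩
    refine Matrix.posSemidef_iff_dotProduct_mulVec.mpr ⟨?_, ?_⟩
    · ext ⟨k, i⟩ ⟨l, j⟩
      have h1 := congrFun hsym (k - l)
      have h2 := congrFun (congrFun h1 i) j
      simp only [ttrans, Matrix.transpose_apply] at h2
      simp only [Matrix.conjTranspose_apply, bcirc, Matrix.of_apply, star_trivial]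
      rw [← h2, neg_sub]
    · intro x
      have := hq (fun t => Matrix.of fun i (_ : Fin 1) => x (t, i))
      rw [quad_eq] at this
      simpa [star_trivial] using this
  · intro hP
    obtain ⟨hherm, hq⟩ := Matrix.posSemidef_iff_dotProduct_mulVec.mp hP
    constructor
    · funext c
      ext j i
      have := congrFun (congrFun hherm ((c, j) : Fin p × Fin n)) (0, i)
      simp only [Matrix.conjTranspose_apply, bcirc, Matrix.of_apply, star_trivial] at this
      simp only [ttrans, Matrix.transpose_apply]
      simpa [zero_sub, sub_zero] using this
    · intro X
      rw [quad_eq]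
      simpa [star_trivial] using hq (fun q => X q.1 q.2 0)

/-- the cyclic shift equivalence -/
def shiftE (p n : ℕ) [NeZero p] : (Fin p × Fin n) ≃ (Fin p × Fin n) :=
  (Equiv.addRight (1 : Fin p)).prodCongr (Equiv.refl _)

lemma bcirc_shift (A : Fin p → Matrix (Fin n) (Fin n) ℝ) :
    (bcirc A).submatrix (shiftE p n) (shiftE p n) = bcirc A := by
  ext ⟨k, i⟩ ⟨l, j⟩
  simp [bcirc, shiftE, Matrix.submatrix_apply, add_sub_add_right_eq_sub]

open Fin.NatCast in
lemma shift_inv_bcirc {M : Matrix (Fin p × Fin n) (Fin p × Fin n) ℝ}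
    (h : M.submatrix (shiftE p n) (shiftE p n) = M) :
    M = bcirc (fun c => Matrix.of fun i j => M (c, i) (0, j)) := by
  have hstep : ∀ (k l : Fin p) (i j : Fin n),
      M (k + 1, i) (l + 1, j) = M (k, i) (l, j) := by
    intro k l i j
    have := congrFun (congrFun h ((k, i) : Fin p × Fin n)) (l, j)
    simpa [shiftE, Matrix.submatrix_apply] using this
  have hiter : ∀ (s : ℕ) (k l : Fin p) (i j : Fin n),
      M (k + (s : Fin p), i) (l + (s : Fin p), j) = M (k, i) (l, j) := by
    intro s
    induction s with
    | zero => simp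
    | succ t ih =>
        intro k l i j
        have hc : ((t + 1 : ℕ) : Fin p) = (t : Fin p) + 1 := by
          push_cast; ring
        rw [hc, ← add_assoc, ← add_assoc, hstep, ih]
  ext ⟨k, i⟩ ⟨l, j⟩
  have := hiter l.val (k - l) 0 i j
  rw [Fin.cast_val_eq_self, sub_add_cancel, zero_add] at this
  simp only [bcirc, Matrix.of_apply]
  exact this

lemma submatrix_pow_equiv {M : Matrix (Fin p × Fin n) (Fin p × Fin n) ℝ}
    (e : (Fin p × Fin n) ≃ (Fin p × Fin n)) (k : ℕ) :
    (M.submatrix e e) ^ k = (M ^ k).submatrix e e := by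
  induction k with
  | zero => simp [Matrix.submatrix_one_equiv]
  | succ s ih => rw [pow_succ, pow_succ, ih, Matrix.submatrix_mul_equiv]

end Bcirc


/-- existence and uniqueness of T-k-th roots of a symmetric T-PSD tensor. -/
theorem tpsd_kth_root {n p : ℕ} [NeZero p] (A : Fin p → Matrix (Fin n) (Fin n) ℝ)
    (hA : TPSD A) (k : ℕ) (hk : 1 ≤ k) :
    ∃! B : Fin p → Matrix (Fin n) (Fin n) ℝ, TPSD B ∧ tpow B k = A := by
  have hk0 : k ≠ 0 := by omega
  have hbA : (bcirc A).PosSemidef := (tpsd_iff_posSemidef A).mp hA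
  obtain ⟨M, ⟨hMpsd, hMk⟩, huniq⟩ := psd_kth_root_matrix hbA hk0
  have hshift : M.submatrix (shiftE p n) (shiftE p n) = M := by
    refine huniq _ ⟨(Matrix.posSemidef_submatrix_equiv (shiftE p n)).mpr hMpsd, ?_⟩
    rw [submatrix_pow_equiv, hMk, bcirc_shift]
  have hMB : M = bcirc (fun c => Matrix.of fun i j => M (c, i) (0, j)) :=
    shift_inv_bcirc hshift
  set B0 : Fin p → Matrix (Fin n) (Fin n) ℝ :=
    fun c => Matrix.of fun i j => M (c, i) (0, j) with hB0
  refine ⟨B0, ⟨?_, ?_⟩, ?_⟩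
  · exact (tpsd_iff_posSemidef B0).mpr (hMB ▸ hMpsd)
  · apply bcirc_injective
    rw [bcirc_tpow, ← hMB, hMk]
  · rintro B' ⟨hB'psd, hB'k⟩
    apply bcirc_injective
    rw [← hMB]
    refine huniq _ ⟨(tpsd_iff_posSemidef B').mp hB'psd, ?_⟩
    rw [← bcirc_tpow, hB'k]
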